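/- Let A : (0, r₁] → (0,∞) be a differentiable function with lim_{r→0⁺} A(r)/rⁿ = ω_n, let n ∈ ℕ, H₀ ≥ 0 and c ≥ 0, and suppose that 2r·A'(r) ≥ 2n(1 − c·r²)·A(r) − 2nH₀r·A(r) for all r ∈ (0,r₁]. Then the function r ↦ A(r)/(rⁿ e^{−nr(H₀ + ½cr)}) is non-decreasing on (0, r₁], and consequently A(r) ≥ ω_n·rⁿ·e^{−nr(H₀ + ½cr)} for all r ∈ (0, r₁]. -/

import Mathlib

open Set MeasureTheory

/-- The real-analytic core of the intrinsic monotonicity of area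
formula in the case of a positive upper curvature bound: if `A : (0, r₁] → (0, ∞)` is a
differentiable function with `A(r)/rⁿ → ωₙ` as `r → 0⁺` (where `ωₙ` is the volume of
the unit ball in `ℝⁿ`), `H₀ ≥ 0`, `c ≥ 0`, and
`2r·A'(r) ≥ 2n(1 − c·r²)·A(r) − 2n·H₀·r·A(r)` on `(0, r₁]`, then
`r ↦ A(r)/(rⁿ e^{−nr(H₀ + ½cr)})` is non-decreasing on `(0, r₁]`, and consequently
`A(r) ≥ ωₙ·rⁿ·e^{−nr(H₀ + ½cr)}` there. -/
theorem monotonicity_core_positive_curvature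
    (n : ℕ) (H0 c r1 : ℝ) (hH0 : 0 ≤ H0) (hc : 0 ≤ c) (hr1 : 0 < r1)
    (A A' : ℝ → ℝ)
    (hApos : ∀ r ∈ Set.Ioc 0 r1, 0 < A r)
    (hderiv : ∀ r ∈ Set.Ioc 0 r1, HasDerivWithinAt A (A' r) (Set.Ioc 0 r1) r)
    (hlim : Filter.Tendsto (fun r => A r / r ^ n) (nhdsWithin 0 (Set.Ioi 0))
      (nhds ((MeasureTheory.volume (Metric.ball (0 : EuclideanSpace ℝ (Fin n)) 1)).toReal)))
    (hode : ∀ r ∈ Set.Ioc 0 r1,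
      2 * n * (1 - c * r ^ 2) * A r - 2 * n * H0 * r * A r ≤ 2 * r * A' r) :
    MonotoneOn
        (fun r => A r / (r ^ n * Real.exp (-(n : ℝ) * r * (H0 + (1 / 2) * c * r))))
        (Set.Ioc 0 r1) ∧
      ∀ r ∈ Set.Ioc 0 r1,
        (MeasureTheory.volume (Metric.ball (0 : EuclideanSpace ℝ (Fin n)) 1)).toReal
          * r ^ n * Real.exp (-(n : ℝ) * r * (H0 + (1 / 2) * c * r)) ≤ A r := by
  set ω : ℝ := (volume (Metric.ball (0 : EuclideanSpace ℝ (Fin n)) 1)).toReal with hωdef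
  set g : ℝ → ℝ := fun r => r ^ n * Real.exp (-(n : ℝ) * r * (H0 + (1 / 2) * c * r)) with hgdef
  have hgpos : ∀ r : ℝ, 0 < r → 0 < g r := fun r hr => mul_pos (pow_pos hr n) (Real.exp_pos _)
  set gd : ℝ → ℝ := fun r =>
      (n : ℝ) * r ^ (n - 1) * Real.exp (-(n : ℝ) * r * (H0 + (1 / 2) * c * r))
        + r ^ n * (Real.exp (-(n : ℝ) * r * (H0 + (1 / 2) * c * r)) * (-(n : ℝ) * (H0 + c * r)))
    with hgddef
  have hgderiv : ∀ r : ℝ, HasDerivAt g (gd r) r := by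
    intro r
    have hu : HasDerivAt (fun r : ℝ => -(n : ℝ) * r * (H0 + (1 / 2) * c * r))
        (-(n : ℝ) * (H0 + c * r)) r := by
      have h := ((hasDerivAt_id r).const_mul (-(n : ℝ))).mul
        (((hasDerivAt_id r).const_mul ((1 / 2) * c)).const_add H0)
      refine h.congr_deriv ?_
      simp only [id_eq]
      ring
    exact (hasDerivAt_pow n r).mul hu.exp
  have hFd : ∀ x ∈ Set.Ioo 0 r1, HasDerivAt (fun r => A r / g r)
      ((A' x * g x - A x * gd x) / (g x) ^ 2) x := by
    intro x hx
    have hAx : HasDerivAt A (A' x) x := by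
      refine (hderiv x ⟨hx.1, hx.2.le⟩).hasDerivAt ?_
      exact Filter.mem_of_superset (Ioo_mem_nhds hx.1 hx.2) Ioo_subset_Ioc_self
    exact hAx.div (hgderiv x) (hgpos x hx.1).ne'
  have hnum : ∀ x ∈ Set.Ioo 0 r1, A x * gd x ≤ A' x * g x := by
    intro x hx
    have hODE := hode x ⟨hx.1, hx.2.le⟩
    have hE : 0 < Real.exp (-(n : ℝ) * x * (H0 + (1 / 2) * c * x)) := Real.exp_pos _
    cases n with
    | zero =>
        simp only [hgddef, hgdef, Nat.cast_zero, pow_zero, zero_mul, neg_zero, one_mul]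
        simp only [Nat.cast_zero, zero_mul, zero_sub, neg_mul, neg_sub, sub_zero] at hODE
        have hA' : 0 ≤ A' x := by nlinarith [hx.1]
        simpa using hA'
    | succ m =>
        have hxm : 0 < x ^ m := pow_pos hx.1 m
        have h2 := mul_le_mul_of_nonneg_left hODE
          (le_of_lt (mul_pos hxm hE))
        simp only [hgddef, hgdef, Nat.succ_sub_one, pow_succ, Nat.cast_succ] at *
        push_cast at *
        nlinarith [h2]
  have hmono : MonotoneOn (fun r => A r / g r) (Set.Ioc 0 r1) := by
    apply monotoneOn_of_deriv_nonneg (convex_Ioc 0 r1)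
    · apply ContinuousOn.div
      · exact fun r hr => (hderiv r hr).differentiableWithinAt.continuousWithinAt
      · exact Continuous.continuousOn (by fun_prop)
      · exact fun r hr => (hgpos r hr.1).ne'
    · intro x hx
      rw [interior_Ioc] at hx
      exact ((hFd x hx).differentiableAt).differentiableWithinAt
    · intro x hx
      rw [interior_Ioc] at hx
      rw [(hFd x hx).deriv]
      apply div_nonneg _ (sq_nonneg _)
      linarith [hnum x hx]
  have hFlim : Filter.Tendsto (fun r => A r / g r) (nhdsWithin 0 (Set.Ioi 0)) (nhds ω) := by
    have hc2 : Continuous (fun r : ℝ => Real.exp (-(n : ℝ) * r * (H0 + (1 / 2) * c * r))) := by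
      fun_prop
    have hEcont : Filter.Tendsto (fun r : ℝ => Real.exp (-(n : ℝ) * r * (H0 + (1 / 2) * c * r)))
        (nhdsWithin 0 (Set.Ioi 0)) (nhds 1) := by
      have h0 := (hc2.tendsto 0).mono_left (nhdsWithin_le_nhds (s := Set.Ioi (0:ℝ)))
      simpa using h0
    have h := hlim.div hEcont one_ne_zero
    simp only [div_one] at h
    refine h.congr fun r => ?_
    simp only [Pi.div_apply, div_div]
    rfl
  refine ⟨hmono, fun r hr => ?_⟩
  have hωle : ω ≤ A r / g r := by
    refine le_of_tendsto hFlim ?_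
    filter_upwards [Ioo_mem_nhdsGT_of_mem (Set.left_mem_Ico.mpr hr.1)] with s hs
    exact hmono ⟨hs.1, (hs.2.trans_le hr.2).le⟩ hr hs.2.le
  have := (le_div_iff₀ (hgpos r hr.1)).mp hωle
  calc ω * r ^ n * Real.exp (-(n : ℝ) * r * (H0 + (1 / 2) * c * r)) = ω * g r := by
        rw [hgdef]; ring
    _ ≤ A r := this
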